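/- Let ν ∈ ℕ and let models be indexed by s : Fin ν → Bool. For a null-hypothesis index v : Fin ν → Bool define O_v = {s | ∀ j, v j = false → s j = false} (models compatible with the null) and A_v = {s | ¬ (s ∈ O_v)}. Let v⁻ : Fin ν → Bool encode a sub-analysis that excludes the variables {j | v⁻ j = false}, set S⁻ = O_{v⁻}, and let v ⊓ v⁻ denote the pointwise Boolean conjunction. Then: (i) O_v ∩ S⁻ = O_{v ⊓ v⁻}; (ii) A_v ∩ S⁻ ⊆ A_{v ⊓ v⁻}; and consequently (iii) for every function PO : (Fin ν → Bool) → [0,∞], the sub-analysis posterior odds satisfy (∑_{s ∈ A_v ∩ S⁻} PO s) / (∑_{s ∈ O_v ∩ S⁻} PO s) ≤ (∑_{s ∈ A_{v ⊓ v⁻}} PO s) / (∑_{s ∈ O_{v ⊓ v⁻}} PO s), with division taken in the extended nonnegative reals. Thus rejection of ω_v in a sub-analysis implies rejection of the intersection null ω_{v ⊓ v⁻} in the full analysis. -/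

import Mathlib

open scoped ENNReal

/-- The set of models (indexed by `s : Fin ν → Bool`) compatible with the null
hypothesis indexed by `v`, namely those with `s j = false` whenever `v j = false`. -/
def nullModels {ν : ℕ} (v : Fin ν → Bool) : Set (Fin ν → Bool) :=
  {s | ∀ j, v j = false → s j = false}

/-- Testing based on a sub-analysis: excluding the variables `{j | v⁻ j = false}`
(i.e. restricting the model space to `S⁻ = O_{v⁻}`), one has
(i) `O_v ∩ S⁻ = O_{v ⊓ v⁻}`, (ii) `A_v ∩ S⁻ ⊆ A_{v ⊓ v⁻}`, and hence
(iii) the sub-analysis model-averaged posterior odds against `ω_v` are a lower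
bound on the full-analysis posterior odds against the intersection null `ω_{v ⊓ v⁻}`. -/
theorem subanalysis_testing
    {ν : ℕ} (v vminus : Fin ν → Bool) (PO : (Fin ν → Bool) → ℝ≥0∞) :
    (nullModels v ∩ nullModels vminus = nullModels (fun j => v j && vminus j)) ∧
    ((nullModels v)ᶜ ∩ nullModels vminus ⊆ (nullModels (fun j => v j && vminus j))ᶜ) ∧
    (∑' s : ((nullModels v)ᶜ ∩ nullModels vminus : Set (Fin ν → Bool)), PO s) /
        (∑' s : (nullModels v ∩ nullModels vminus : Set (Fin ν → Bool)), PO s) ≤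
      (∑' s : ((nullModels (fun j => v j && vminus j))ᶜ : Set (Fin ν → Bool)), PO s) /
        (∑' s : (nullModels (fun j => v j && vminus j) : Set (Fin ν → Bool)), PO s) := by
  have h1 : nullModels v ∩ nullModels vminus = nullModels (fun j => v j && vminus j) := by
    ext s
    constructor
    · rintro ⟨hv, hm⟩ j hj
      rcases Bool.and_eq_false_iff.mp hj with h | h
      · exact hv j h
      · exact hm j h
    · intro h
      constructor
      · intro j hj
        exact h j (by simp [hj])
      · intro j hj
        exact h j (by simp [hj])
  have h2 : (nullModels v)ᶜ ∩ nullModels vminus ⊆ (nullModels (fun j => v j && vminus j))ᶜ := by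
    rintro s ⟨hv, hm⟩ hmem
    exact hv ((h1 ▸ hmem : s ∈ nullModels v ∩ nullModels vminus)).1
  refine ⟨h1, h2, ?_⟩
  rw [h1]
  refine ENNReal.div_le_div ?_ le_rfl
  rw [tsum_subtype, tsum_subtype]
  exact ENNReal.tsum_le_tsum fun s => Set.indicator_le_indicator_of_subset h2 (fun _ => zero_le) s
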